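/- Let f : [a,b] → ℝ be such that f' is absolutely continuous on [a,b] and f'' ∈ L^∞([a,b]). Then |(1/2)[f((a+b)/2) + (f(a)+f(b))/2] - (1/(b-a))∫_a^b f(t) dt| ≤ (1/48)(b-a)²·‖f''‖_∞. -/

import Mathlib

open MeasureTheory Set

lemma half_bound (a b c d : ℝ) (hac : a ≤ c) (hcd : c ≤ d) (hdb : d ≤ b)
    (f f' f'' : ℝ → ℝ) (M : ℝ)
    (hf' : ∀ t ∈ Icc a b, HasDerivAt f (f' t) t)
    (hf'' : ∀ t ∈ Icc a b, HasDerivAt f' (f'' t) t)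
    (hint : IntervalIntegrable f'' volume a b)
    (hM : ∀ᵐ t ∂volume, t ∈ Icc a b → |f'' t| ≤ M) :
    |(d - c)/2 * (f c + f d) - ∫ t in c..d, f t| ≤ M * (d - c)^3 / 12 := by
  have hab : a ≤ b := le_trans hac (hcd.trans hdb)
  have hsub : Icc c d ⊆ Icc a b := Icc_subset_Icc hac hdb
  have huCD : uIcc c d = Icc c d := uIcc_of_le hcd
  set K : ℝ → ℝ := fun t => (t - c) * (d - t) / 2 with hK
  -- integrability
  have hf''cd : IntervalIntegrable f'' volume c d := by
    apply hint.mono_set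
    rw [huCD, uIcc_of_le hab]; exact hsub
  have hKcont : Continuous K := by fun_prop
  have h1 : IntervalIntegrable (fun t => K t * f'' t) volume c d :=
    hf''cd.continuousOn_mul hKcont.continuousOn
  have hfc : IntervalIntegrable f volume c d := by
    apply ContinuousOn.intervalIntegrable
    intro t ht
    exact ((hf' t (hsub (huCD ▸ ht))).continuousAt).continuousWithinAt
  -- FTC for g
  set g : ℝ → ℝ := fun t => K t * f' t - (c + d - 2*t)/2 * f t with hg
  have hgderiv : ∀ t ∈ Icc c d, HasDerivAt g (K t * f'' t + f t) t := by
    intro t ht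
    have htab := hsub ht
    have hKt : HasDerivAt K ((c + d - 2*t)/2) t := by
      have := (((hasDerivAt_id t).sub_const c).mul
        ((hasDerivAt_const t d).sub (hasDerivAt_id t))).div_const 2
      refine this.congr_deriv ?_
      simp [id]
      ring
    have hK't : HasDerivAt (fun t => (c + d - 2*t)/2) (-1) t := by
      have := (((hasDerivAt_const t (c + d)).sub
        ((hasDerivAt_id t).const_mul 2))).div_const 2
      refine this.congr_deriv ?_
      ring
    have := (hKt.mul (hf'' t htab)).sub (hK't.mul (hf' t htab))
    refine this.congr_deriv ?_
    ring
  have hintg : IntervalIntegrable (fun t => K t * f'' t + f t) volume c d := h1.add hfc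
  have hFTC : ∫ t in c..d, (K t * f'' t + f t) = g d - g c :=
    intervalIntegral.integral_eq_sub_of_hasDerivAt (fun t ht => hgderiv t (huCD ▸ ht)) hintg
  have hgd : g d - g c = (d - c)/2 * (f c + f d) := by
    simp only [hg, hK]
    ring
  have hsum : (∫ t in c..d, K t * f'' t) + ∫ t in c..d, f t = (d - c)/2 * (f c + f d) := by
    rw [← intervalIntegral.integral_add h1 hfc, hFTC, hgd]
  have hEq : (d - c)/2 * (f c + f d) - ∫ t in c..d, f t = ∫ t in c..d, K t * f'' t := by
    linarith
  rw [hEq]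
  -- bound the integral
  have habs : |∫ t in c..d, K t * f'' t| ≤ ∫ t in c..d, |K t * f'' t| :=
    intervalIntegral.abs_integral_le_integral_abs hcd
  have hmono : (∫ t in c..d, |K t * f'' t|) ≤ ∫ t in c..d, M * K t := by
    apply intervalIntegral.integral_mono_ae_restrict hcd h1.abs
      ((hKcont.const_smul M).intervalIntegrable c d)
    rw [Filter.EventuallyLE, ae_restrict_iff' measurableSet_Icc]
    filter_upwards [hM] with t htM htcd
    have hKnn : 0 ≤ K t := by
      have h1 : 0 ≤ t - c := by linarith [htcd.1]
      have h2 : 0 ≤ d - t := by linarith [htcd.2]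
      positivity
    rw [abs_mul, abs_of_nonneg hKnn, mul_comm]
    exact mul_le_mul_of_nonneg_right (htM (hsub htcd)) hKnn
  have hcomp : (∫ t in c..d, M * K t) = M * (d - c)^3 / 12 := by
    have : (fun t => M * K t) = fun t => (M*(c+d)/2)*t - (M/2)*t^2 - M*c*d/2 := by
      funext t; simp only [hK]; ring
    rw [this]
    rw [intervalIntegral.integral_sub, intervalIntegral.integral_sub,
      intervalIntegral.integral_const_mul, intervalIntegral.integral_const_mul,
      integral_id, integral_pow, intervalIntegral.integral_const]
    · simp only [smul_eq_mul]; push_cast; ring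
    · exact (continuous_const.mul continuous_id).intervalIntegrable c d
    · exact (continuous_const.mul (continuous_pow 2)).intervalIntegrable c d
    · exact ((continuous_const.mul continuous_id).sub
        (continuous_const.mul (continuous_pow 2))).intervalIntegrable c d
    · exact continuous_const.intervalIntegrable c d
  calc |∫ t in c..d, K t * f'' t| ≤ ∫ t in c..d, |K t * f'' t| := habs
    _ ≤ ∫ t in c..d, M * K t := hmono
    _ = M * (d - c)^3 / 12 := hcomp

theorem averaged_midpoint_trapezoid
    (a b : ℝ) (hab : a < b) (f f' f'' : ℝ → ℝ) (M : ℝ)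
    (hf' : ∀ t ∈ Icc a b, HasDerivAt f (f' t) t)
    (hf'' : ∀ t ∈ Icc a b, HasDerivAt f' (f'' t) t)
    (hint : IntervalIntegrable f'' volume a b)
    (hM : ∀ᵐ t ∂volume, t ∈ Icc a b → |f'' t| ≤ M) :
    |(1/2) * (f ((a + b) / 2) + (f a + f b) / 2)
      - (1 / (b - a)) * ∫ t in a..b, f t|
    ≤ (1/48) * (b - a)^2 * M := by
  set m := (a + b) / 2 with hm
  have ham : a ≤ m := by simp only [hm]; linarith
  have hmb : m ≤ b := by simp only [hm]; linarith
  have hb : (0:ℝ) < b - a := by linarith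
  have hA := half_bound a b a m le_rfl ham hmb f f' f'' M hf' hf'' hint hM
  have hB := half_bound a b m b ham hmb le_rfl f f' f'' M hf' hf'' hint hM
  have hcf : ContinuousOn f (Icc a b) := fun t ht => (hf' t ht).continuousAt.continuousWithinAt
  have hI1 : IntervalIntegrable f volume a m :=
    (hcf.mono (by rw [uIcc_of_le ham]; exact Icc_subset_Icc le_rfl hmb)).intervalIntegrable
  have hI2 : IntervalIntegrable f volume m b :=
    (hcf.mono (by rw [uIcc_of_le hmb]; exact Icc_subset_Icc ham le_rfl)).intervalIntegrable
  have hsplit : ∫ t in a..b, f t = (∫ t in a..m, f t) + ∫ t in m..b, f t :=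
    (intervalIntegral.integral_add_adjacent_intervals hI1 hI2).symm
  have hE : (1/2) * (f m + (f a + f b) / 2) - (1 / (b - a)) * ∫ t in a..b, f t
      = (((m - a)/2 * (f a + f m) - ∫ t in a..m, f t)
        + ((b - m)/2 * (f m + f b) - ∫ t in m..b, f t)) / (b - a) := by
    rw [hsplit]
    have hma : m - a = (b - a)/2 := by simp only [hm]; ring
    have hbm : b - m = (b - a)/2 := by simp only [hm]; ring
    rw [hma, hbm]
    field_simp
    ring
  rw [hE, abs_div, abs_of_pos hb, div_le_iff₀ hb]
  have hma : m - a = (b - a)/2 := by simp only [hm]; ring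
  have hbm : b - m = (b - a)/2 := by simp only [hm]; ring
  calc |((m - a)/2 * (f a + f m) - ∫ t in a..m, f t)
        + ((b - m)/2 * (f m + f b) - ∫ t in m..b, f t)|
      ≤ |(m - a)/2 * (f a + f m) - ∫ t in a..m, f t|
        + |(b - m)/2 * (f m + f b) - ∫ t in m..b, f t| := abs_add_le _ _
    _ ≤ M * (m - a)^3 / 12 + M * (b - m)^3 / 12 := add_le_add hA hB
    _ = 1/48 * (b - a)^2 * M * (b - a) := by rw [hma, hbm]; ring
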